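/- Let 0 < λ₂ ≤ 1/2, let j be a job, and let G be a finite set of jobs, each with relative laxity at most λ₂ (hence each 1/2-tight), with p_i ≤ p_j for all i ∈ G, and with each lifespan I(i) intersecting I(j). If G is feasible on m* machines, then ∑_{i∈G} p_i ≤ 5·m*·|I(j)|. -/

import Mathlib

open MeasureTheory Set

/-- A job with release time `r`, size `p > 0` and deadline `d`, satisfying `r + p ≤ d`. -/
structure Job where
  r : ℝ
  p : ℝ
  d : ℝ
  p_pos : 0 < p
  fits : r + p ≤ d

namespace Job

/-- The lifespan `I(j) = [r_j, d_j]` of a job. -/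
def lifespan (j : Job) : Set ℝ := Set.Icc j.r j.d

/-- The length `|I(j)| = d_j - r_j` of the lifespan of a job. -/
def len (j : Job) : ℝ := j.d - j.r

/-- The laxity `ℓ_j = d_j - r_j - p_j` of a job. -/
def laxity (j : Job) : ℝ := j.d - j.r - j.p

/-- A job is `α`-tight if `p_j ≥ α·|I(j)|`. -/
def IsTight (α : ℝ) (j : Job) : Prop := α * j.len ≤ j.p

end Job

/-- `P` is a schedule of the jobs `job j`, `j ∈ J`, on `m` machines:
each job is processed on a measurable subset of its lifespan, and at every time
at most `m` jobs are processed simultaneously. -/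
def IsSchedule {ι : Type*} (J : Finset ι) (job : ι → Job) (m : ℕ) (P : ι → Set ℝ) : Prop :=
  (∀ j ∈ J, MeasurableSet (P j)) ∧
  (∀ j ∈ J, P j ⊆ (job j).lifespan) ∧
  (∀ t : ℝ, ∀ S : Finset ι, S ⊆ J → (∀ j ∈ S, t ∈ P j) → S.card ≤ m)

/-- The jobs `job j`, `j ∈ J`, are feasible on `m` machines: there is a schedule on `m`
machines processing every job for exactly `p_j` time units. -/
def FeasibleOn {ι : Type*} (J : Finset ι) (job : ι → Job) (m : ℕ) : Prop :=
  ∃ P : ι → Set ℝ, IsSchedule J job m P ∧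
    ∀ j ∈ J, volume (P j) = ENNReal.ofReal (job j).p

/-- `T ⊆ ℝ` is a finite union of (closed) time intervals. -/
def FiniteUnionOfIntervals (T : Set ℝ) : Prop :=
  ∃ s : Finset (ℝ × ℝ), T = ⋃ q ∈ s, Set.Icc q.1 q.2

/-- If all jobs in `G` have relative laxity at most `λ₂ ≤ 1/2`, are no larger than `j`, have
lifespans intersecting `I(j)`, and `G` is feasible on `m*` machines, then the total size of
the jobs in `G` is at most `5·m*·|I(j)|`. -/
theorem total_size_G_le {ι : Type*} (lam₂ : ℝ) (hlam₂0 : 0 < lam₂) (hlam₂ : lam₂ ≤ 1 / 2)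
    (j : Job) (G : Finset ι) (job : ι → Job)
    (hlax : ∀ i ∈ G, (job i).laxity ≤ lam₂ * (job i).len)
    (hp : ∀ i ∈ G, (job i).p ≤ j.p)
    (hint : ∀ i ∈ G, ((job i).lifespan ∩ j.lifespan).Nonempty)
    (mstar : ℕ) (hfeas : FeasibleOn G job mstar) :
    ∑ i ∈ G, (job i).p ≤ 5 * mstar * j.len := by
  classical
  obtain ⟨P, ⟨hmeas, hsub, hcap⟩, hvol⟩ := hfeas
  set K : Set ℝ := Set.Icc (j.r - 2 * j.len) (j.d + 2 * j.len) with hK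
  have hlenj : 0 < j.len := by
    have := j.fits; have := j.p_pos; unfold Job.len; linarith
  have hPK : ∀ i ∈ G, P i ⊆ K := by
    intro i hi
    have h1 := hlax i hi
    have h2 := hp i hi
    have hli : (job i).len ≤ 2 * j.len := by
      have hp2 : (job i).len ≤ 2 * (job i).p := by
        have hl0 : 0 ≤ (job i).len := by
          have := (job i).fits; have := (job i).p_pos; unfold Job.len; linarith
        unfold Job.laxity Job.len at *
        nlinarith
      have hpj : j.p ≤ j.len := by have := j.fits; unfold Job.len; linarith
      linarith
    obtain ⟨t, ht1, ht2⟩ := hint i hi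
    intro s hs
    have hs' := hsub i hi hs
    rw [Job.lifespan, Set.mem_Icc] at ht1 ht2 hs'
    rw [hK, Set.mem_Icc]
    have hlen : j.len = j.d - j.r := rfl
    have hleni : (job i).len = (job i).d - (job i).r := rfl
    constructor <;>
      linarith [ht1.1, ht1.2, ht2.1, ht2.2, hs'.1, hs'.2]
  -- pointwise bound
  have h2 : ∀ t, ∑ i ∈ G, (P i).indicator (fun _ => (1 : ENNReal)) t ≤
      (mstar : ENNReal) * K.indicator (fun _ => 1) t := by
    intro t
    by_cases htK : t ∈ K
    · have hsum : ∑ i ∈ G, (P i).indicator (fun _ => (1 : ENNReal)) t =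
          ((G.filter fun i => t ∈ P i).card : ENNReal) := by
        simp only [Set.indicator_apply]
        rw [Finset.sum_boole]
      rw [hsum]
      have hcard := hcap t (G.filter fun i => t ∈ P i) (Finset.filter_subset _ _)
        (fun i hi => (Finset.mem_filter.mp hi).2)
      simp only [Set.indicator_of_mem htK, mul_one]
      exact_mod_cast hcard
    · have : ∀ i ∈ G, (P i).indicator (fun _ => (1 : ENNReal)) t = 0 := by
        intro i hi
        exact Set.indicator_of_notMem (fun h => htK (hPK i hi h)) _
      rw [Finset.sum_eq_zero this]
      exact zero_le
  have key : ∑ i ∈ G, volume (P i) ≤ (mstar : ENNReal) * volume K := by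
    have h1 : ∑ i ∈ G, volume (P i) =
        ∫⁻ t, ∑ i ∈ G, (P i).indicator (fun _ => (1 : ENNReal)) t := by
      rw [lintegral_finset_sum _ (fun i hi => measurable_const.indicator (hmeas i hi))]
      refine Finset.sum_congr rfl fun i hi => ?_
      rw [lintegral_indicator (hmeas i hi)]
      simp
    rw [h1]
    calc ∫⁻ t, ∑ i ∈ G, (P i).indicator (fun _ => (1 : ENNReal)) t
        ≤ ∫⁻ t, (mstar : ENNReal) * K.indicator (fun _ => 1) t := lintegral_mono h2
      _ = (mstar : ENNReal) * ∫⁻ t, K.indicator (fun _ => (1 : ENNReal)) t :=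
          lintegral_const_mul' _ _ (by simp)
      _ = (mstar : ENNReal) * volume K := by
          rw [lintegral_indicator measurableSet_Icc, setLIntegral_one]
  have hvolK : volume K = ENNReal.ofReal (5 * j.len) := by
    rw [hK, Real.volume_Icc]
    congr 1
    unfold Job.len
    ring
  have hsum : ∑ i ∈ G, volume (P i) = ENNReal.ofReal (∑ i ∈ G, (job i).p) := by
    rw [ENNReal.ofReal_sum_of_nonneg (fun i hi => (job i).p_pos.le)]
    exact Finset.sum_congr rfl fun i hi => hvol i hi
  rw [hsum, hvolK] at key
  have hfin : (mstar : ENNReal) * ENNReal.ofReal (5 * j.len) ≠ ⊤ :=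
    ENNReal.mul_ne_top (ENNReal.natCast_ne_top _) ENNReal.ofReal_ne_top
  have h := ENNReal.toReal_mono hfin key
  rw [ENNReal.toReal_ofReal (Finset.sum_nonneg fun i _ => (job i).p_pos.le),
      ENNReal.toReal_mul, ENNReal.toReal_natCast,
      ENNReal.toReal_ofReal (by positivity)] at h
  linarith
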